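/- Comparison principle: let U be an open subset of (0,∞)^d, and let f₁ and f₂ belong to C([0,T] × (cl(U) ∩ (0,∞)^d) × X) ∩ C^{1,2}((0,T) × U × X), each of at most linear growth in the space variable (sup |f_j(t,s,i)|/(1+‖s‖₁) < ∞). Assume ∂f₁/∂t + Lf₁ ≤ 0 and ∂f₂/∂t + Lf₂ ≥ 0 on (0,T) × U × X, and that f₁ ≥ f₂ at t = T and on (0,T) × (∂U ∩ (0,∞)^d) × X. Then f₁ ≥ f₂ on (0,T) × U × X. -/

import Mathlib

open MeasureTheory Real Filter Matrix

noncomputable section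


/-- The positive orthant `(0,∞)^d`. -/
def orthant (d : ℕ) : Set (Fin d → ℝ) := Set.univ.pi fun _ => Set.Ioi (0:ℝ)

/-- The ℓ¹ norm `‖s‖₁ = ∑ l |s l|`. -/
def norm1 {d : ℕ} (s : Fin d → ℝ) : ℝ := ∑ l, |s l|

/-- The diffusion matrix `a(i) = σ(i) σ(i)ᵀ`. -/
def amat {d k : ℕ} (σm : Fin k → Matrix (Fin d) (Fin d) ℝ) (i : Fin k) :
    Matrix (Fin d) (Fin d) ℝ := σm i * (σm i)ᵀ

/-- The lognormal density `α(x,s,i,v)`. -/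
def alpha {d k : ℕ} (r : Fin k → ℝ) (σm : Fin k → Matrix (Fin d) (Fin d) ℝ)
    (x s : Fin d → ℝ) (i : Fin k) (v : ℝ) : ℝ :=
  Real.exp (-(1/2 : ℝ) * ∑ l, ∑ l',
      (v • amat σm i)⁻¹ l l'
        * (Real.log (x l / s l) - (r i - (1/2 : ℝ) * amat σm i l l) * v)
        * (Real.log (x l' / s l') - (r i - (1/2 : ℝ) * amat σm i l' l') * v))
    / (Real.sqrt ((2 * Real.pi) ^ d * (v • amat σm i).det) * ∏ l, x l)

/-- Partial derivative in the `l`-th space coordinate. -/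
def pd {d : ℕ} (l : Fin d) (f : (Fin d → ℝ) → ℝ) (s : Fin d → ℝ) : ℝ :=
  deriv (fun c => f (Function.update s l c)) (s l)

/-- The spatial operator `𝕃`. -/
def Lop {d k : ℕ} (r : Fin k → ℝ) (σm : Fin k → Matrix (Fin d) (Fin d) ℝ)
    (Λ : Fin k → Fin k → ℝ) (φ : ℝ → (Fin d → ℝ) → Fin k → ℝ)
    (t : ℝ) (s : Fin d → ℝ) (i : Fin k) : ℝ :=
  r i * ∑ l, s l * pd l (fun s' => φ t s' i) s
  + (1/2 : ℝ) * ∑ l, ∑ l',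
      amat σm i l l' * s l * s l' * pd l (pd l' (fun s' => φ t s' i)) s
  - r i * φ t s i + ∑ j, Λ i j * φ t s j

/-- `f` is of class `C^{1,2}` on `(0,T) × U × X`. -/
def C12On {d k : ℕ} (T : ℝ) (U : Set (Fin d → ℝ))
    (f : ℝ → (Fin d → ℝ) → Fin k → ℝ) : Prop :=
  ∀ i : Fin k,
    (∀ t ∈ Set.Ioo (0:ℝ) T, ∀ s ∈ U,
      DifferentiableAt ℝ (fun t' => f t' s i) t ∧
      (∀ l, DifferentiableAt ℝ (fun c => f t (Function.update s l c) i) (s l)) ∧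
      (∀ l l', DifferentiableAt ℝ
          (fun c => pd l' (fun s' => f t s' i) (Function.update s l c)) (s l))) ∧
    ContinuousOn (fun p : ℝ × (Fin d → ℝ) => deriv (fun t' => f t' p.2 i) p.1)
      (Set.Ioo 0 T ×ˢ U) ∧
    (∀ l : Fin d, ContinuousOn
        (fun p : ℝ × (Fin d → ℝ) => pd l (fun s' => f p.1 s' i) p.2)
        (Set.Ioo 0 T ×ˢ U)) ∧
    (∀ l l' : Fin d, ContinuousOn
        (fun p : ℝ × (Fin d → ℝ) => pd l (pd l' (fun s' => f p.1 s' i)) p.2)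
        (Set.Ioo 0 T ×ˢ U))


/-- Mean value theorem on an unordered interval. -/
lemma mvt_uIcc (G : ℝ → ℝ) (p q : ℝ)
    (hd : ∀ c ∈ Set.uIcc p q, DifferentiableAt ℝ G c) :
    ∃ ξ ∈ Set.uIcc p q, G q - G p = deriv G ξ * (q - p) := by
  rcases lt_trichotomy p q with h | h | h
  · obtain ⟨c, hc, hc'⟩ := exists_deriv_eq_slope G h
      (fun x hx => (hd x (by rw [Set.uIcc_of_le h.le]; exact hx)).continuousAt.continuousWithinAt)
      (fun x hx => (hd x (by rw [Set.uIcc_of_le h.le]; exact Set.Ioo_subset_Icc_self hx)).differentiableWithinAt)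
    refine ⟨c, by rw [Set.uIcc_of_le h.le]; exact Set.Ioo_subset_Icc_self hc, ?_⟩
    rw [hc']
    have hne : q - p ≠ 0 := by linarith
    field_simp
  · exact ⟨p, Set.left_mem_uIcc, by simp [h]⟩
  · obtain ⟨c, hc, hc'⟩ := exists_deriv_eq_slope G h
      (fun x hx => (hd x (by rw [Set.uIcc_of_ge h.le]; exact hx)).continuousAt.continuousWithinAt)
      (fun x hx => (hd x (by rw [Set.uIcc_of_ge h.le]; exact Set.Ioo_subset_Icc_self hx)).differentiableWithinAt)
    refine ⟨c, by rw [Set.uIcc_of_ge h.le]; exact Set.Ioo_subset_Icc_self hc, ?_⟩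
    rw [hc']
    have hne : p - q ≠ 0 := by linarith
    field_simp
    ring



set_option maxHeartbeats 1000000 in
lemma hasFDerivAt_of_partials {d : ℕ} {g : (Fin d → ℝ) → ℝ} {V : Set (Fin d → ℝ)}
    (hV : IsOpen V) {x : Fin d → ℝ} (hx : x ∈ V)
    (hdiff : ∀ y ∈ V, ∀ l, DifferentiableAt ℝ (fun c => g (Function.update y l c)) (y l))
    (hcont : ∀ l : Fin d, ContinuousOn (pd l g) V) :
    HasFDerivAt g (∑ l, pd l g x • (ContinuousLinearMap.proj l :
      ((Fin d → ℝ) →L[ℝ] ℝ))) x := by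
  set L : (Fin d → ℝ) →L[ℝ] ℝ := ∑ l, pd l g x • (ContinuousLinearMap.proj l) with hL
  have hLapp : ∀ h : Fin d → ℝ, L h = ∑ l, pd l g x * h l := by
    intro h
    rw [hL]
    simp only [ContinuousLinearMap.coe_sum', Finset.sum_apply, ContinuousLinearMap.coe_smul',
      Pi.smul_apply, ContinuousLinearMap.proj_apply, smul_eq_mul]
  rw [hasFDerivAt_iff_isLittleO_nhds_zero, Asymptotics.isLittleO_iff]
  intro ε hε
  set ε' : ℝ := ε / (d + 1) with hε'
  have hε'pos : 0 < ε' := by positivity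
  have hev : ∀ᶠ y in nhds x, y ∈ V ∧ ∀ l, |pd l g y - pd l g x| ≤ ε' := by
    refine (hV.eventually_mem hx).and (Filter.eventually_all.2 fun l => ?_)
    have hca : ContinuousAt (pd l g) x := (hcont l).continuousAt (hV.mem_nhds hx)
    have := hca.eventually_mem (Metric.closedBall_mem_nhds (pd l g x) hε'pos)
    filter_upwards [this] with y hy
    simpa [Real.dist_eq] using hy
  obtain ⟨δ, hδpos, hδ⟩ := Metric.eventually_nhds_iff.1 hev
  rw [Metric.eventually_nhds_iff]
  refine ⟨δ, hδpos, fun h hh => ?_⟩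
  rw [dist_zero_right] at hh
  set z : ℕ → (Fin d → ℝ) := fun m l => if (l : ℕ) < m then x l + h l else x l with hz
  -- membership of intermediate points
  have hzmem : ∀ y : Fin d → ℝ, (∀ l, y l ∈ Set.uIcc (x l) (x l + h l)) →
      y ∈ V ∧ ∀ l, |pd l g y - pd l g x| ≤ ε' := by
    intro y hy
    refine hδ ?_
    rw [dist_eq_norm]
    have hnorm : ‖y - x‖ ≤ ‖h‖ := by
      rw [pi_norm_le_iff_of_nonneg (norm_nonneg h)]
      intro l
      have h1 := (hy l).1
      have h2 := (hy l).2
      have hb : |h l| ≤ ‖h‖ := by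
        simpa [Real.norm_eq_abs] using norm_le_pi_norm h l
      simp only [Pi.sub_apply, Real.norm_eq_abs]
      have : |y l - x l| ≤ |h l| := by
        rcases Set.mem_uIcc.1 (hy l) with ⟨ha, hb2⟩ | ⟨ha, hb2⟩ <;>
          rcases abs_cases (h l) with ⟨he, _⟩ | ⟨he, _⟩ <;>
          (rw [abs_le]; constructor <;> linarith)
      linarith
    linarith
  -- endpoints of the telescope
  have hz0 : z 0 = x := by funext l; simp [hz]
  have hzd : z d = x + h := by
    funext l
    simp [hz, l.isLt]
  -- telescoping sum identity
  have htel : g (x + h) - g x = ∑ m ∈ Finset.range d, (g (z (m + 1)) - g (z m)) := by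
    rw [Finset.sum_range_sub (fun m => g (z m)), hz0, hzd]
  -- per-step mean value
  have hstep : ∀ l : Fin d, ∃ ξ ∈ Set.uIcc (x l) (x l + h l),
      g (z ((l : ℕ) + 1)) - g (z (l : ℕ)) =
        pd l g (Function.update (z (l : ℕ)) l ξ) * h l := by
    intro l
    set G : ℝ → ℝ := fun c => g (Function.update (z (l : ℕ)) l c) with hG
    have hupdmem : ∀ c ∈ Set.uIcc (x l) (x l + h l),
        Function.update (z (l : ℕ)) l c ∈ V ∧
          ∀ l', |pd l' g (Function.update (z (l : ℕ)) l c) - pd l' g x| ≤ ε' := by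
      intro c hc
      refine hzmem _ fun l' => ?_
      by_cases hll : l' = l
      · subst hll; simpa using hc
      · simp only [Function.update_of_ne hll, hz]
        split <;> [exact Set.right_mem_uIcc; exact Set.left_mem_uIcc]
    have hGdiff : ∀ c ∈ Set.uIcc (x l) (x l + h l), DifferentiableAt ℝ G c := by
      intro c hc
      have hmem := (hupdmem c hc).1
      have := hdiff _ hmem l
      simp only [Function.update_idem, Function.update_self] at this
      exact this
    obtain ⟨ξ, hξ, hξ'⟩ := mvt_uIcc G (x l) (x l + h l) hGdiff
    refine ⟨ξ, hξ, ?_⟩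
    have h1 : z ((l : ℕ) + 1) = Function.update (z (l : ℕ)) l (x l + h l) := by
      funext m
      rcases eq_or_ne m l with hml | hml
      · subst hml; simp [hz, Function.update_self]
      · have : (m : ℕ) ≠ (l : ℕ) := fun hc => hml (Fin.ext hc)
        simp only [Function.update_of_ne hml, hz]
        rcases Nat.lt_trichotomy (m : ℕ) (l : ℕ) with hlt | heq | hgt
        · simp [hlt, Nat.lt_succ_of_lt hlt]
        · exact absurd heq this
        · have h1 : ¬ ((m : ℕ) < (l : ℕ)) := by omega
          have h2 : ¬ ((m : ℕ) < (l : ℕ) + 1) := by omega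
          simp [h1, h2]
    have h2 : z (l : ℕ) = Function.update (z (l : ℕ)) l (x l) := by
      funext m
      rcases eq_or_ne m l with hml | hml
      · subst hml; simp [hz, Function.update_self]
      · simp [Function.update_of_ne hml]
    have hderiv : deriv G ξ = pd l g (Function.update (z (l : ℕ)) l ξ) := by
      rw [pd]
      congr 1
      · funext c; rw [hG]; simp [Function.update_idem]
      · simp [Function.update_self]
    calc g (z ((l : ℕ) + 1)) - g (z (l : ℕ))
        = G (x l + h l) - G (x l) := by rw [h1]; nth_rewrite 2 [h2]; rfl
      _ = deriv G ξ * (x l + h l - x l) := hξ'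
      _ = pd l g (Function.update (z (l : ℕ)) l ξ) * h l := by rw [hderiv]; ring_nf
  choose ξ hξmem hξeq using hstep
  -- final bound
  have hsum1 : g (x + h) - g x = ∑ l : Fin d, (g (z ((l : ℕ) + 1)) - g (z (l : ℕ))) := by
    rw [htel, Fin.sum_univ_eq_sum_range (fun m => g (z (m + 1)) - g (z m))]
  have hmain : g (x + h) - g x - L h =
      ∑ l : Fin d, (pd l g (Function.update (z (l : ℕ)) l (ξ l)) - pd l g x) * h l := by
    rw [hsum1, hLapp, ← Finset.sum_sub_distrib]
    refine Finset.sum_congr rfl fun l _ => ?_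
    rw [hξeq l]
    ring
  rw [Real.norm_eq_abs, hmain]
  calc |∑ l : Fin d, (pd l g (Function.update (z (l : ℕ)) l (ξ l)) - pd l g x) * h l|
      ≤ ∑ l : Fin d, |(pd l g (Function.update (z (l : ℕ)) l (ξ l)) - pd l g x) * h l| :=
        Finset.abs_sum_le_sum_abs _ _
    _ ≤ ∑ _l : Fin d, ε' * ‖h‖ := by
        refine Finset.sum_le_sum fun l _ => ?_
        rw [abs_mul]
        have hb : |h l| ≤ ‖h‖ := by
          simpa [Real.norm_eq_abs] using norm_le_pi_norm h l
        have hptmem : Function.update (z (l : ℕ)) l (ξ l) ∈ V ∧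
            ∀ l', |pd l' g (Function.update (z (l : ℕ)) l (ξ l)) - pd l' g x| ≤ ε' := by
          refine hzmem _ fun l' => ?_
          by_cases hll : l' = l
          · subst hll; simpa using hξmem _
          · simp only [Function.update_of_ne hll, hz]
            split <;> [exact Set.right_mem_uIcc; exact Set.left_mem_uIcc]
        exact mul_le_mul (hptmem.2 l) hb (abs_nonneg _) hε'pos.le
    _ = d * (ε' * ‖h‖) := by
        rw [Finset.sum_const, Finset.card_univ, Fintype.card_fin, nsmul_eq_mul]
    _ ≤ ε * ‖h‖ := by
        rw [hε']
        have hd1 : (0:ℝ) < d + 1 := by positivity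
        have : (d : ℝ) * (ε / (d + 1)) ≤ ε := by
          rw [mul_div_assoc']
          rw [div_le_iff₀ hd1]
          nlinarith [hε.le]
        nlinarith [norm_nonneg h]



/-- Chain rule along a line, from continuous partials. -/
lemma hasDerivAt_line {d : ℕ} {g : (Fin d → ℝ) → ℝ} {V : Set (Fin d → ℝ)}
    (hV : IsOpen V)
    (hdiff : ∀ y ∈ V, ∀ l, DifferentiableAt ℝ (fun c => g (Function.update y l c)) (y l))
    (hcont : ∀ l : Fin d, ContinuousOn (pd l g) V) (x v : Fin d → ℝ) (u : ℝ)
    (hxu : x + u • v ∈ V) :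
    HasDerivAt (fun u' => g (x + u' • v)) (∑ l, v l * pd l g (x + u • v)) u := by
  have hF := hasFDerivAt_of_partials hV hxu hdiff hcont
  have hline : HasDerivAt (fun u' : ℝ => x + u' • v) v u := by
    simpa using ((hasDerivAt_id u).smul_const v).const_add x
  have := hF.comp_hasDerivAt u hline
  refine this.congr_deriv ?_
  simp only [ContinuousLinearMap.coe_sum', Finset.sum_apply, ContinuousLinearMap.coe_smul',
    Pi.smul_apply, ContinuousLinearMap.proj_apply, smul_eq_mul]
  exact Finset.sum_congr rfl fun l _ => mul_comm _ _ |>.symm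

/-- One-dimensional second derivative test at a local minimum. -/
lemma second_deriv_test {ψ ψ' : ℝ → ℝ} {c : ℝ}
    (hmin : IsLocalMin ψ 0)
    (hd : ∀ᶠ u in nhds (0:ℝ), HasDerivAt ψ (ψ' u) u)
    (hd2 : HasDerivAt ψ' c 0) : 0 ≤ c := by
  by_contra hc
  push_neg at hc
  have h0 : ψ' 0 = 0 := by
    have h1 : deriv ψ 0 = 0 := hmin.deriv_eq_zero
    have h2 : deriv ψ 0 = ψ' 0 := hd.self_of_nhds.deriv
    linarith
  have hslope : Filter.Tendsto (slope ψ' 0) (nhdsWithin 0 {(0:ℝ)}ᶜ) (nhds c) :=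
    hasDerivAt_iff_tendsto_slope.1 hd2
  have hslope' : Filter.Tendsto (slope ψ' 0) (nhdsWithin 0 (Set.Ioi 0)) (nhds c) :=
    hslope.mono_left (nhdsWithin_mono _ fun y hy => ne_of_gt hy)
  have hneg : ∀ᶠ u in nhdsWithin 0 (Set.Ioi 0), slope ψ' 0 u < 0 :=
    hslope'.eventually_lt_const hc
  have hpos : ∀ᶠ u in nhdsWithin 0 (Set.Ioi 0), ψ' u < 0 := by
    filter_upwards [hneg, self_mem_nhdsWithin] with u hu hu'
    rw [slope_def_field, h0, sub_zero, sub_zero] at hu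
    have hu0 : (0:ℝ) < u := hu'
    rcases div_neg_iff.1 hu with ⟨_, h2⟩ | ⟨h1, _⟩
    · linarith
    · exact h1
  obtain ⟨δ₂, hδ₂pos, hδ₂⟩ := mem_nhdsGT_iff_exists_Ioo_subset.1 hpos
  obtain ⟨δ₁, hδ₁pos, hδ₁⟩ := Metric.eventually_nhds_iff.1 (hd.and hmin)
  set b : ℝ := min δ₁ δ₂ / 2 with hb
  have hbpos : 0 < b := by
    have h1 : (0:ℝ) < δ₁ := hδ₁pos
    have h2 : (0:ℝ) < δ₂ := hδ₂pos
    have := lt_min h1 h2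
    rw [hb]
    linarith
  have hbδ₁ : b < δ₁ := by
    have := min_le_left δ₁ δ₂; linarith
  have hbδ₂ : b < δ₂ := by
    have := min_le_right δ₁ δ₂; linarith
  have hanti : StrictAntiOn ψ (Set.Icc 0 b) := by
    refine strictAntiOn_of_deriv_neg (convex_Icc 0 b) ?_ ?_
    · intro u hu
      have : dist u 0 < δ₁ := by
        rw [Real.dist_eq, sub_zero]
        rw [Set.mem_Icc] at hu
        rw [abs_of_nonneg hu.1]
        linarith [hu.2]
      exact ((hδ₁ this).1.differentiableAt.continuousAt).continuousWithinAt
    · intro u hu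
      rw [interior_Icc] at hu
      have hdist : dist u 0 < δ₁ := by
        rw [Real.dist_eq, sub_zero, abs_of_nonneg hu.1.le]
        linarith [hu.2]
      have hderiv : deriv ψ u = ψ' u := (hδ₁ hdist).1.deriv
      rw [hderiv]
      exact hδ₂ ⟨hu.1, by linarith [hu.2]⟩
  have h1 : ψ b < ψ 0 := hanti (Set.left_mem_Icc.2 hbpos.le) (Set.right_mem_Icc.2 hbpos.le) hbpos
  have h2 : ψ 0 ≤ ψ b := by
    refine (hδ₁ ?_).2
    rw [Real.dist_eq, sub_zero, abs_of_nonneg hbpos.le]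
    exact hbδ₁
  linarith

/-- At a minimum at the left endpoint, the derivative is nonnegative. -/
lemma deriv_nonneg_left_endpoint {φ : ℝ → ℝ} {a b c : ℝ} (hab : a < b)
    (hφ : HasDerivAt φ c a) (hmin : ∀ x ∈ Set.Icc a b, φ a ≤ φ x) : 0 ≤ c := by
  have hslope : Filter.Tendsto (slope φ a) (nhdsWithin a {a}ᶜ) (nhds c) :=
    hasDerivAt_iff_tendsto_slope.1 hφ
  have hslope' : Filter.Tendsto (slope φ a) (nhdsWithin a (Set.Ioi a)) (nhds c) :=
    hslope.mono_left (nhdsWithin_mono _ fun y hy => ne_of_gt hy)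
  refine ge_of_tendsto hslope' ?_
  filter_upwards [Ioo_mem_nhdsGT_of_mem (Set.left_mem_Ico.2 hab)] with u hu
  rw [slope_def_field]
  have h1 : φ a ≤ φ u := hmin u ⟨hu.1.le, hu.2.le⟩
  have h2 : 0 < u - a := by linarith [hu.1]
  exact div_nonneg (by linarith) h2.le

/-- A local minimum composes with the coordinate update map. -/
lemma isLocalMin_update {d : ℕ} {g : (Fin d → ℝ) → ℝ} {x : Fin d → ℝ}
    (h : IsLocalMin g x) (l : Fin d) :
    IsLocalMin (fun c => g (Function.update x l c)) (x l) := by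
  have hc : Continuous (fun c : ℝ => Function.update x l c) :=
    continuous_const.update l continuous_id
  have ht : Filter.Tendsto (fun c : ℝ => Function.update x l c) (nhds (x l)) (nhds x) := by
    have := hc.tendsto (x l)
    rwa [Function.update_eq_self] at this
  have := ht.eventually h
  unfold IsLocalMin IsMinFilter
  simpa [Function.update_eq_self] using this

/-- Second-order optimality: the iterated-partials quadratic form is PSD at an
interior local minimum of a `C²`-like function. -/
lemma quad_form_nonneg {d : ℕ} {g : (Fin d → ℝ) → ℝ} {V : Set (Fin d → ℝ)}
    (hV : IsOpen V) {x : Fin d → ℝ} (hx : x ∈ V)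
    (h1 : ∀ y ∈ V, ∀ l, DifferentiableAt ℝ (fun c => g (Function.update y l c)) (y l))
    (h1c : ∀ l : Fin d, ContinuousOn (pd l g) V)
    (h2 : ∀ y ∈ V, ∀ lo li, DifferentiableAt ℝ
      (fun c => pd li g (Function.update y lo c)) (y lo))
    (h2c : ∀ lo li : Fin d, ContinuousOn (pd lo (pd li g)) V)
    (hmin : IsLocalMin g x) (v : Fin d → ℝ) :
    0 ≤ ∑ lo, ∑ li, v lo * v li * pd lo (pd li g) x := by
  have htend : Filter.Tendsto (fun u : ℝ => x + u • v) (nhds 0) (nhds x) := by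
    have hcont : Continuous (fun u : ℝ => x + u • v) :=
      continuous_const.add (continuous_id.smul continuous_const)
    have := hcont.tendsto 0
    simpa using this
  have hVev : ∀ᶠ u in nhds (0:ℝ), x + u • v ∈ V := htend.eventually (hV.eventually_mem hx)
  have hψmin : IsLocalMin (fun u : ℝ => g (x + u • v)) 0 := by
    have := htend.eventually hmin
    unfold IsLocalMin IsMinFilter
    simpa using this
  set ψ' : ℝ → ℝ := fun u => ∑ l, v l * pd l g (x + u • v) with hψ'
  have hd : ∀ᶠ u in nhds (0:ℝ), HasDerivAt (fun u' => g (x + u' • v)) (ψ' u) u := by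
    filter_upwards [hVev] with u hu
    exact hasDerivAt_line hV h1 h1c x v u hu
  have hd2 : HasDerivAt ψ' (∑ li, v li * ∑ lo, v lo * pd lo (pd li g) x) 0 := by
    have hterm : ∀ li : Fin d, HasDerivAt (fun u : ℝ => v li * pd li g (x + u • v))
        (v li * ∑ lo, v lo * pd lo (pd li g) x) 0 := by
      intro li
      refine HasDerivAt.const_mul _ ?_
      have := hasDerivAt_line hV (fun y hy lo => h2 y hy lo li)
        (fun lo => h2c lo li) x v 0 (by simpa using hx)
      simpa using this
    have := HasDerivAt.sum (u := Finset.univ) (fun li _ => hterm li)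
    simpa [hψ', Finset.sum_fn] using this
  have hkey := second_deriv_test hψmin hd hd2
  calc (0:ℝ) ≤ ∑ li, v li * ∑ lo, v lo * pd lo (pd li g) x := hkey
    _ = ∑ lo, ∑ li, v lo * v li * pd lo (pd li g) x := by
        rw [Finset.sum_comm]
        refine Finset.sum_congr rfl fun lo _ => ?_
        rw [Finset.mul_sum]
        exact Finset.sum_congr rfl fun li _ => by ring



def barF (c : ℝ) : ℝ := c^2 + (c^2)⁻¹

def barB {d : ℕ} (s : Fin d → ℝ) : ℝ := ∑ l, barF (s l)

lemma barF_pos {c : ℝ} (hc : 0 < c) : 0 < barF c := by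
  unfold barF; positivity

lemma barF_nonneg (c : ℝ) : 0 ≤ barF c := by
  unfold barF; positivity

lemma barB_nonneg {d : ℕ} (s : Fin d → ℝ) : 0 ≤ barB s :=
  Finset.sum_nonneg fun l _ => barF_nonneg _

lemma barB_pos {d : ℕ} (hd : 1 ≤ d) (s : Fin d → ℝ) (hs : ∀ l, 0 < s l) :
    0 < barB s := by
  have hlt : (0:ℕ) < d := hd
  exact Finset.sum_pos (fun l _ => barF_pos (hs l)) ⟨⟨0, hlt⟩, Finset.mem_univ _⟩

lemma hasDerivAt_barF {c : ℝ} (hc : c ≠ 0) :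
    HasDerivAt barF (2*c - 2/c^3) c := by
  have h1 : HasDerivAt (fun c : ℝ => c^2) (2*c) c := by
    simpa using hasDerivAt_pow 2 c
  have h2 : HasDerivAt (fun c : ℝ => (c^2)⁻¹) (-(2*c) / (c^2)^2) c :=
    h1.inv (pow_ne_zero 2 hc)
  have := h1.add h2
  refine this.congr_deriv ?_
  field_simp
  ring

lemma hasDerivAt_barF' {c : ℝ} (hc : c ≠ 0) :
    HasDerivAt (fun c : ℝ => 2*c - 2/c^3) (2 + 6/c^4) c := by
  have h1 : HasDerivAt (fun c : ℝ => 2*c) 2 c := by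
    simpa using (hasDerivAt_id c).const_mul (2:ℝ)
  have h3 : HasDerivAt (fun c : ℝ => c^3) (3*c^2) c := by
    simpa using hasDerivAt_pow 3 c
  have h2 : HasDerivAt (fun c : ℝ => 2/c^3) (2 * (-(3*c^2) / (c^3)^2)) c := by
    have hinv : HasDerivAt (fun c : ℝ => (c^3)⁻¹) (-(3*c^2) / (c^3)^2) c := by
      exact h3.inv (pow_ne_zero 3 hc)
    have := hinv.const_mul (2:ℝ)
    have heq : (fun c : ℝ => 2/c^3) = fun c : ℝ => 2 * (c^3)⁻¹ := by
      funext u; rw [div_eq_mul_inv]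
    rw [heq]
    exact this
  have := h1.sub h2
  refine this.congr_deriv ?_
  field_simp
  ring

lemma barB_update {d : ℕ} (s : Fin d → ℝ) (l : Fin d) (c : ℝ) :
    barB (Function.update s l c) = barF c + ∑ m ∈ Finset.univ.erase l, barF (s m) := by
  unfold barB
  rw [← Finset.add_sum_erase Finset.univ (fun m => barF (Function.update s l c m))
    (Finset.mem_univ l)]
  congr 1
  · rw [Function.update_self]
  · refine Finset.sum_congr rfl fun m hm => ?_
    rw [Function.update_of_ne (Finset.ne_of_mem_erase hm)]

lemma hasDerivAt_barB_update {d : ℕ} (s : Fin d → ℝ) (l : Fin d) {c : ℝ} (hc : c ≠ 0) :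
    HasDerivAt (fun c => barB (Function.update s l c)) (2*c - 2/c^3) c := by
  have heq : (fun c => barB (Function.update s l c)) =
      fun c => barF c + ∑ m ∈ Finset.univ.erase l, barF (s m) := by
    funext c; rw [barB_update]
  rw [heq]
  exact (hasDerivAt_barF hc).add_const _



section WSec

variable {d k : ℕ} {T : ℝ} {U : Set (Fin d → ℝ)}
variable {f₁ f₂ : ℝ → (Fin d → ℝ) → Fin k → ℝ}

/-- The penalized difference function. -/
def wfun (f₁ f₂ : ℝ → (Fin d → ℝ) → Fin k → ℝ) (ε K T : ℝ) (t : ℝ)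
    (s : Fin d → ℝ) (i : Fin k) : ℝ :=
  f₁ t s i - f₂ t s i + ε * Real.exp (K * (T - t)) * barB s

lemma mem_orthant_pos {d : ℕ} {y : Fin d → ℝ} (h : y ∈ orthant d) (l : Fin d) :
    0 < y l := by
  have := h l (Set.mem_univ l)
  exact this

lemma mem_orthant_of_pos {d : ℕ} {y : Fin d → ℝ} (h : ∀ l, 0 < y l) :
    y ∈ orthant d := fun l _ => h l

lemma wfun_hasDerivAt_time (hC12₁ : C12On T U f₁) (hC12₂ : C12On T U f₂)
    {t : ℝ} (ht : t ∈ Set.Ioo 0 T) {s : Fin d → ℝ} (hs : s ∈ U) (i : Fin k) (ε K : ℝ) :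
    HasDerivAt (fun t' => wfun f₁ f₂ ε K T t' s i)
      (deriv (fun t' => f₁ t' s i) t - deriv (fun t' => f₂ t' s i) t
        - ε * K * Real.exp (K * (T - t)) * barB s) t := by
  have h1 := ((hC12₁ i).1 t ht s hs).1
  have h2 := ((hC12₂ i).1 t ht s hs).1
  have hexp : HasDerivAt (fun t' => ε * Real.exp (K * (T - t')) * barB s)
      (ε * (Real.exp (K * (T - t)) * (K * (-1))) * barB s) t := by
    have ha : HasDerivAt (fun t' : ℝ => T - t') (-1) t := by
      simpa using (hasDerivAt_id t).const_sub T
    have hb := (ha.const_mul K).exp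
    exact (hb.const_mul ε).mul_const (barB s)
  have hfin := (h1.hasDerivAt.sub h2.hasDerivAt).add hexp
  refine hfin.congr_deriv ?_
  ring

lemma wfun_hasDerivAt_space (hUsub : U ⊆ orthant d)
    (hC12₁ : C12On T U f₁) (hC12₂ : C12On T U f₂)
    {t : ℝ} (ht : t ∈ Set.Ioo 0 T) {y : Fin d → ℝ} (hy : y ∈ U) (i : Fin k)
    (ε K : ℝ) (l : Fin d) :
    HasDerivAt (fun c => wfun f₁ f₂ ε K T t (Function.update y l c) i)
      (pd l (fun s' => f₁ t s' i) y - pd l (fun s' => f₂ t s' i) y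
        + ε * Real.exp (K * (T - t)) * (2 * y l - 2 / (y l)^3)) (y l) := by
  have hy0 : 0 < y l := mem_orthant_pos (hUsub hy) l
  have h1 := (((hC12₁ i).1 t ht y hy).2.1 l).hasDerivAt
  have h2 := (((hC12₂ i).1 t ht y hy).2.1 l).hasDerivAt
  have hbar := (hasDerivAt_barB_update y l (ne_of_gt hy0)).const_mul
    (ε * Real.exp (K * (T - t)))
  exact (h1.sub h2).add hbar

lemma wfun_pd_eq (hUsub : U ⊆ orthant d)
    (hC12₁ : C12On T U f₁) (hC12₂ : C12On T U f₂)
    {t : ℝ} (ht : t ∈ Set.Ioo 0 T) {y : Fin d → ℝ} (hy : y ∈ U) (i : Fin k)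
    (ε K : ℝ) (l : Fin d) :
    pd l (fun s' => wfun f₁ f₂ ε K T t s' i) y =
      pd l (fun s' => f₁ t s' i) y - pd l (fun s' => f₂ t s' i) y
        + ε * Real.exp (K * (T - t)) * (2 * y l - 2 / (y l)^3) :=
  (wfun_hasDerivAt_space hUsub hC12₁ hC12₂ ht hy i ε K l).deriv

lemma wfun_hasDerivAt_space2 (hU : IsOpen U) (hUsub : U ⊆ orthant d)
    (hC12₁ : C12On T U f₁) (hC12₂ : C12On T U f₂)
    {t : ℝ} (ht : t ∈ Set.Ioo 0 T) {y : Fin d → ℝ} (hy : y ∈ U) (i : Fin k)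
    (ε K : ℝ) (lo li : Fin d) :
    HasDerivAt (fun c => pd li (fun s' => wfun f₁ f₂ ε K T t s' i)
        (Function.update y lo c))
      (pd lo (pd li (fun s' => f₁ t s' i)) y - pd lo (pd li (fun s' => f₂ t s' i)) y
        + ε * Real.exp (K * (T - t)) * (if lo = li then 2 + 6/(y li)^4 else 0)) (y lo) := by
  have hy0 : ∀ m, 0 < y m := fun m => mem_orthant_pos (hUsub hy) m
  have h1 := (((hC12₁ i).1 t ht y hy).2.2 lo li).hasDerivAt
  have h2 := (((hC12₂ i).1 t ht y hy).2.2 lo li).hasDerivAt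
  have hbar : HasDerivAt (fun c => ε * Real.exp (K * (T - t)) *
      (2 * (Function.update y lo c) li - 2 / ((Function.update y lo c) li)^3))
      (ε * Real.exp (K * (T - t)) * (if lo = li then 2 + 6/(y li)^4 else 0)) (y lo) := by
    by_cases hll : lo = li
    · subst hll
      simp only [Function.update_self, if_pos rfl]
      exact (hasDerivAt_barF' (ne_of_gt (hy0 lo))).const_mul _
    · have hne : li ≠ lo := fun h => hll h.symm
      simp only [Function.update_of_ne hne, if_neg hll, mul_zero]
      exact hasDerivAt_const _ _
  have hmain := (h1.sub h2).add hbar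
  refine hmain.congr_of_eventuallyEq ?_
  have hupd : Filter.Tendsto (fun c : ℝ => Function.update y lo c) (nhds (y lo)) (nhds y) := by
    have hcu : Continuous (fun c : ℝ => Function.update y lo c) :=
      continuous_const.update lo continuous_id
    have := hcu.tendsto (y lo)
    rwa [Function.update_eq_self] at this
  filter_upwards [hupd.eventually (hU.eventually_mem hy)] with c hc
  exact (wfun_hasDerivAt_space hUsub hC12₁ hC12₂ ht hc i ε K li).deriv

lemma wfun_pd2_eq (hU : IsOpen U) (hUsub : U ⊆ orthant d)
    (hC12₁ : C12On T U f₁) (hC12₂ : C12On T U f₂)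
    {t : ℝ} (ht : t ∈ Set.Ioo 0 T) {y : Fin d → ℝ} (hy : y ∈ U) (i : Fin k)
    (ε K : ℝ) (lo li : Fin d) :
    pd lo (pd li (fun s' => wfun f₁ f₂ ε K T t s' i)) y =
      pd lo (pd li (fun s' => f₁ t s' i)) y - pd lo (pd li (fun s' => f₂ t s' i)) y
        + ε * Real.exp (K * (T - t)) * (if lo = li then 2 + 6/(y li)^4 else 0) :=
  (wfun_hasDerivAt_space2 hU hUsub hC12₁ hC12₂ ht hy i ε K lo li).deriv

lemma wfun_contOn_pd (hUsub : U ⊆ orthant d)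
    (hC12₁ : C12On T U f₁) (hC12₂ : C12On T U f₂)
    {t : ℝ} (ht : t ∈ Set.Ioo 0 T) (i : Fin k) (ε K : ℝ) (li : Fin d) :
    ContinuousOn (pd li (fun s' => wfun f₁ f₂ ε K T t s' i)) U := by
  have hmap : ContinuousOn (fun y : Fin d → ℝ => ((t, y) : ℝ × (Fin d → ℝ))) U :=
    (continuous_const.prodMk continuous_id).continuousOn
  have hc1 : ContinuousOn (fun y : Fin d → ℝ => pd li (fun s' => f₁ t s' i) y) U :=
    ((hC12₁ i).2.2.1 li).comp hmap (fun y hy => Set.mk_mem_prod ht hy)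
  have hc2 : ContinuousOn (fun y : Fin d → ℝ => pd li (fun s' => f₂ t s' i) y) U :=
    ((hC12₂ i).2.2.1 li).comp hmap (fun y hy => Set.mk_mem_prod ht hy)
  have hc3 : ContinuousOn (fun y : Fin d → ℝ =>
      ε * Real.exp (K * (T - t)) * (2 * y li - 2 / (y li)^3)) U := by
    refine continuousOn_const.mul (ContinuousOn.sub
      (continuousOn_const.mul (continuous_apply li).continuousOn) ?_)
    exact continuousOn_const.div ((continuous_apply li).continuousOn.pow 3)
      (fun y hy => pow_ne_zero _ (ne_of_gt (mem_orthant_pos (hUsub hy) li)))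
  refine ContinuousOn.congr ((hc1.sub hc2).add hc3) ?_
  intro y hy
  exact wfun_pd_eq hUsub hC12₁ hC12₂ ht hy i ε K li

lemma wfun_contOn_pd2 (hU : IsOpen U) (hUsub : U ⊆ orthant d)
    (hC12₁ : C12On T U f₁) (hC12₂ : C12On T U f₂)
    {t : ℝ} (ht : t ∈ Set.Ioo 0 T) (i : Fin k) (ε K : ℝ) (lo li : Fin d) :
    ContinuousOn (pd lo (pd li (fun s' => wfun f₁ f₂ ε K T t s' i))) U := by
  have hmap : ContinuousOn (fun y : Fin d → ℝ => ((t, y) : ℝ × (Fin d → ℝ))) U :=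
    (continuous_const.prodMk continuous_id).continuousOn
  have hc1 : ContinuousOn (fun y : Fin d → ℝ =>
      pd lo (pd li (fun s' => f₁ t s' i)) y) U :=
    ((hC12₁ i).2.2.2 lo li).comp hmap (fun y hy => Set.mk_mem_prod ht hy)
  have hc2 : ContinuousOn (fun y : Fin d → ℝ =>
      pd lo (pd li (fun s' => f₂ t s' i)) y) U :=
    ((hC12₂ i).2.2.2 lo li).comp hmap (fun y hy => Set.mk_mem_prod ht hy)
  have hc3 : ContinuousOn (fun y : Fin d → ℝ =>
      ε * Real.exp (K * (T - t)) * (if lo = li then 2 + 6/(y li)^4 else 0)) U := by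
    by_cases hll : lo = li
    · simp only [if_pos hll]
      refine continuousOn_const.mul (continuousOn_const.add ?_)
      exact continuousOn_const.div ((continuous_apply li).continuousOn.pow 4)
        (fun y hy => pow_ne_zero _ (ne_of_gt (mem_orthant_pos (hUsub hy) li)))
    · simp only [if_neg hll, mul_zero]
      exact continuousOn_const
  refine ContinuousOn.congr ((hc1.sub hc2).add hc3) ?_
  intro y hy
  exact wfun_pd2_eq hU hUsub hC12₁ hC12₂ ht hy i ε K lo li

end WSec



lemma norm1_nonneg {d : ℕ} (s : Fin d → ℝ) : 0 ≤ norm1 s :=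
  Finset.sum_nonneg fun l _ => abs_nonneg _

lemma amat_diag_nonneg {d k : ℕ} (σm : Fin k → Matrix (Fin d) (Fin d) ℝ)
    (i : Fin k) (l : Fin d) : 0 ≤ amat σm i l l := by
  rw [amat, Matrix.mul_apply]
  refine Finset.sum_nonneg fun m _ => ?_
  rw [Matrix.transpose_apply]
  exact mul_self_nonneg _

lemma amat_quad_nonneg {d k : ℕ} (σm : Fin k → Matrix (Fin d) (Fin d) ℝ) (i : Fin k)
    (c : Fin d → ℝ) (X : Fin d → Fin d → ℝ)
    (hX : ∀ v : Fin d → ℝ, 0 ≤ ∑ lo, ∑ li, v lo * v li * X lo li) :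
    0 ≤ ∑ l, ∑ l', amat σm i l l' * c l * c l' * X l l' := by
  have h1 : ∀ l l' : Fin d, amat σm i l l' * c l * c l' * X l l'
      = ∑ m, (σm i l m * c l) * (σm i l' m * c l') * X l l' := by
    intro l l'
    rw [amat, Matrix.mul_apply, Finset.sum_mul, Finset.sum_mul, Finset.sum_mul]
    refine Finset.sum_congr rfl fun m _ => ?_
    rw [Matrix.transpose_apply]
    ring
  calc (0:ℝ) ≤ ∑ m : Fin d, ∑ lo : Fin d, ∑ li : Fin d,
        (σm i lo m * c lo) * (σm i li m * c li) * X lo li :=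
      Finset.sum_nonneg fun m _ => hX (fun l => σm i l m * c l)
    _ = ∑ l, ∑ l', amat σm i l l' * c l * c l' * X l l' := by
        rw [Finset.sum_comm]
        refine Finset.sum_congr rfl fun lo _ => ?_
        rw [Finset.sum_comm]
        refine Finset.sum_congr rfl fun li _ => ?_
        exact (h1 lo li).symm


set_option maxHeartbeats 4000000 in
theorem stmt_14 (d k : ℕ) (hd : 1 ≤ d) (hk : 0 < k)
    (r : Fin k → ℝ) (hr : ∀ i, 0 ≤ r i)
    (σm : Fin k → Matrix (Fin d) (Fin d) ℝ) (hσ : ∀ i, IsUnit (σm i).det)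
    (Λ : Fin k → Fin k → ℝ) (hΛ1 : ∀ i j, i ≠ j → 0 ≤ Λ i j)
    (hΛ2 : ∀ i : Fin k, ∑ j, Λ i j = 0)
    (T : ℝ) (hT : 0 < T)
    (U : Set (Fin d → ℝ)) (hU : IsOpen U) (hUsub : U ⊆ orthant d)
    (f₁ f₂ : ℝ → (Fin d → ℝ) → Fin k → ℝ)
    (hcont₁ : ∀ i : Fin k, ContinuousOn (fun p : ℝ × (Fin d → ℝ) => f₁ p.1 p.2 i)
        (Set.Icc 0 T ×ˢ (closure U ∩ orthant d)))
    (hcont₂ : ∀ i : Fin k, ContinuousOn (fun p : ℝ × (Fin d → ℝ) => f₂ p.1 p.2 i)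
        (Set.Icc 0 T ×ˢ (closure U ∩ orthant d)))
    (hC12₁ : C12On T U f₁) (hC12₂ : C12On T U f₂)
    (hgrow₁ : ∃ M : ℝ, ∀ t ∈ Set.Icc (0:ℝ) T, ∀ s ∈ closure U ∩ orthant d,
        ∀ i : Fin k, |f₁ t s i| ≤ M * (1 + norm1 s))
    (hgrow₂ : ∃ M : ℝ, ∀ t ∈ Set.Icc (0:ℝ) T, ∀ s ∈ closure U ∩ orthant d,
        ∀ i : Fin k, |f₂ t s i| ≤ M * (1 + norm1 s))
    (hsub : ∀ t ∈ Set.Ioo (0:ℝ) T, ∀ s ∈ U, ∀ i : Fin k,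
        deriv (fun t' => f₁ t' s i) t + Lop r σm Λ f₁ t s i ≤ 0)
    (hsup : ∀ t ∈ Set.Ioo (0:ℝ) T, ∀ s ∈ U, ∀ i : Fin k,
        0 ≤ deriv (fun t' => f₂ t' s i) t + Lop r σm Λ f₂ t s i)
    (hterm : ∀ s ∈ closure U ∩ orthant d, ∀ i : Fin k, f₂ T s i ≤ f₁ T s i)
    (hbdry : ∀ t ∈ Set.Ioo (0:ℝ) T, ∀ s ∈ frontier U ∩ orthant d, ∀ i : Fin k,
        f₂ t s i ≤ f₁ t s i) :
    ∀ t ∈ Set.Ioo (0:ℝ) T, ∀ s ∈ U, ∀ i : Fin k, f₂ t s i ≤ f₁ t s i := by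
  intro t₀ ht₀ s₀ hs₀ i₀
  obtain ⟨M₁, hM₁⟩ := hgrow₁
  obtain ⟨M₂, hM₂⟩ := hgrow₂
  set M : ℝ := |M₁| + |M₂| with hMdef
  have hMnn : 0 ≤ M := by positivity
  have hMh : ∀ t ∈ Set.Icc (0:ℝ) T, ∀ s ∈ closure U ∩ orthant d, ∀ i : Fin k,
      -(M * (1 + norm1 s)) ≤ f₁ t s i - f₂ t s i := by
    intro t ht s hs i
    have h1 := hM₁ t ht s hs i
    have h2 := hM₂ t ht s hs i
    have hn : (0:ℝ) ≤ 1 + norm1 s := by linarith [norm1_nonneg s]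
    have e1 : M₁ * (1 + norm1 s) ≤ |M₁| * (1 + norm1 s) :=
      mul_le_mul_of_nonneg_right (le_abs_self M₁) hn
    have e2 : M₂ * (1 + norm1 s) ≤ |M₂| * (1 + norm1 s) :=
      mul_le_mul_of_nonneg_right (le_abs_self M₂) hn
    have a1 := neg_abs_le (f₁ t s i)
    have a2 := le_abs_self (f₂ t s i)
    have hdist : M * (1 + norm1 s) = |M₁| * (1 + norm1 s) + |M₂| * (1 + norm1 s) := by
      rw [hMdef]; ring
    linarith
  set A : ℝ := 1 + ∑ i, ∑ l, amat σm i l l with hAdef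
  have hAa : ∀ (i : Fin k) (l : Fin d), amat σm i l l ≤ A := by
    intro i l
    have h1 : amat σm i l l ≤ ∑ i, ∑ l, amat σm i l l := by
      have hin : (∑ l, amat σm i l l) ≤ ∑ i, ∑ l, amat σm i l l :=
        Finset.single_le_sum (f := fun i => ∑ l, amat σm i l l)
          (fun j _ => Finset.sum_nonneg fun l _ => amat_diag_nonneg σm j l)
          (Finset.mem_univ i)
      have hin2 : amat σm i l l ≤ ∑ l, amat σm i l l :=
        Finset.single_le_sum (fun m _ => amat_diag_nonneg σm i m) (Finset.mem_univ l)
      linarith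
    rw [hAdef]; linarith
  have hA1 : 1 ≤ A := by
    rw [hAdef]
    have : 0 ≤ ∑ i, ∑ l, amat σm i l l :=
      Finset.sum_nonneg fun i _ => Finset.sum_nonneg fun l _ => amat_diag_nonneg σm i l
    linarith
  set Rb : ℝ := 1 + ∑ i, r i with hRbdef
  have hRbr : ∀ i, r i ≤ Rb := by
    intro i
    have : r i ≤ ∑ i, r i := Finset.single_le_sum (fun j _ => hr j) (Finset.mem_univ i)
    rw [hRbdef]; linarith
  have hRb1 : 1 ≤ Rb := by
    rw [hRbdef]
    have : 0 ≤ ∑ i, r i := Finset.sum_nonneg fun i _ => hr i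
    linarith
  set K : ℝ := 2 * Rb + 3 * A + 1 with hKdef
  have hK1 : 1 ≤ K := by rw [hKdef]; linarith
  clear_value M A Rb K
  have hs₀pos : ∀ l, 0 < s₀ l := fun l => mem_orthant_pos (hUsub hs₀) l
  -- main estimate
  have key : ∀ ε : ℝ, 0 < ε → 0 ≤ wfun f₁ f₂ ε K T t₀ s₀ i₀ := by
    intro ε hε
    set R : ℝ := 1 + M * (1 + d) / ε + ∑ l, (s₀ l + (s₀ l)⁻¹) with hRdef
    have hsum0 : 0 ≤ ∑ l, (s₀ l + (s₀ l)⁻¹) :=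
      Finset.sum_nonneg fun l _ => by have := hs₀pos l; positivity
    have hMd0 : 0 ≤ M * (1 + d) / ε := by positivity
    clear_value R
    have hR1 : 1 ≤ R := by rw [hRdef]; linarith
    have hRpos : 0 < R := lt_of_lt_of_le one_pos hR1
    have hRs : ∀ l, R⁻¹ ≤ s₀ l ∧ s₀ l ≤ R := by
      intro l
      have hterm : s₀ l + (s₀ l)⁻¹ ≤ ∑ l, (s₀ l + (s₀ l)⁻¹) :=
        Finset.single_le_sum (f := fun l => s₀ l + (s₀ l)⁻¹)
          (fun m _ => by have := hs₀pos m; positivity) (Finset.mem_univ l)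
      have hp := hs₀pos l
      have hipos : 0 < (s₀ l)⁻¹ := by positivity
      constructor
      · have h1 : (s₀ l)⁻¹ ≤ R := by rw [hRdef]; nlinarith
        calc R⁻¹ ≤ ((s₀ l)⁻¹)⁻¹ := by
              exact inv_anti₀ hipos h1
          _ = s₀ l := by rw [inv_inv]
      · rw [hRdef]; nlinarith
    have hRM : M * (1 + d * R) ≤ ε * R ^ 2 := by
      have hdR : (1:ℝ) + d * R ≤ (1 + d) * R := by nlinarith [Nat.cast_nonneg (α := ℝ) d]
      have hεR : M * (1 + d) ≤ ε * R := by
        have h1 : M * (1 + d) / ε + 1 ≤ R := by rw [hRdef]; linarith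
        have h3 : M * (1 + d) / ε * ε = M * (1 + d) :=
          div_mul_cancel₀ _ (ne_of_gt hε)
        nlinarith [mul_le_mul_of_nonneg_left h1 hε.le, h3]
      nlinarith [mul_le_mul_of_nonneg_left hdR hMnn, Nat.cast_nonneg (α := ℝ) d]
    set Box : Set (Fin d → ℝ) := Set.Icc (fun _ => R⁻¹) (fun _ => R) with hBoxdef
    set D : Set (ℝ × (Fin d → ℝ)) := Set.Icc t₀ T ×ˢ (closure U ∩ Box) with hDdef
    have hDsub : ∀ p ∈ D, p.1 ∈ Set.Icc (0:ℝ) T ∧ p.2 ∈ closure U ∩ orthant d := by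
      intro p hp
      obtain ⟨hp1, hp2⟩ := hp
      exact ⟨⟨le_trans ht₀.1.le hp1.1, hp1.2⟩, hp2.1,
        mem_orthant_of_pos fun l => lt_of_lt_of_le (inv_pos.2 hRpos) (hp2.2.1 l)⟩
    have hDcpt : IsCompact D :=
      isCompact_Icc.prod (isCompact_Icc.inter_left isClosed_closure)
    have hDne : (t₀, s₀) ∈ D :=
      ⟨⟨le_refl t₀, ht₀.2.le⟩, subset_closure hs₀,
        fun l => (hRs l).1, fun l => (hRs l).2⟩
    have hwcont : ∀ i : Fin k, ContinuousOn
        (fun p : ℝ × (Fin d → ℝ) => wfun f₁ f₂ ε K T p.1 p.2 i) D := by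
      intro i
      have hbig : ContinuousOn (fun p : ℝ × (Fin d → ℝ) => wfun f₁ f₂ ε K T p.1 p.2 i)
          (Set.Icc (0:ℝ) T ×ˢ (closure U ∩ orthant d)) := by
        have hexp : ContinuousOn (fun p : ℝ × (Fin d → ℝ) =>
            ε * Real.exp (K * (T - p.1))) (Set.Icc (0:ℝ) T ×ˢ (closure U ∩ orthant d)) := by
          refine Continuous.continuousOn ?_
          exact continuous_const.mul ((continuous_const.mul
            (continuous_const.sub continuous_fst)).rexp)
        have hbarB : ContinuousOn (fun p : ℝ × (Fin d → ℝ) => barB p.2)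
            (Set.Icc (0:ℝ) T ×ˢ (closure U ∩ orthant d)) := by
          unfold barB barF
          refine continuousOn_finset_sum _ fun l _ => ?_
          refine ContinuousOn.add ?_ ?_
          · exact (((continuous_apply l).comp continuous_snd).pow 2).continuousOn
          · refine ContinuousOn.inv₀
              ((((continuous_apply l).comp continuous_snd).pow 2).continuousOn) ?_
            intro p hp
            exact pow_ne_zero _ (ne_of_gt (mem_orthant_pos hp.2.2 l))
        exact ((hcont₁ i).sub (hcont₂ i)).add (hexp.mul hbarB)
      refine hbig.mono fun p hp => ?_
      exact ⟨(hDsub p hp).1, (hDsub p hp).2⟩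
    choose p hpD hpmin using fun i : Fin k =>
      hDcpt.exists_isMinOn ⟨(t₀, s₀), hDne⟩ (hwcont i)
    obtain ⟨istar, -, histar⟩ := Finset.exists_min_image Finset.univ
      (fun i : Fin k => wfun f₁ f₂ ε K T (p i).1 (p i).2 i) ⟨⟨0, hk⟩, Finset.mem_univ _⟩
    set tst : ℝ := (p istar).1 with htstdef
    set sst : Fin d → ℝ := (p istar).2 with hsstdef
    have hmin : ∀ q ∈ D, ∀ j : Fin k,
        wfun f₁ f₂ ε K T tst sst istar ≤ wfun f₁ f₂ ε K T q.1 q.2 j := by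
      intro q hq j
      exact le_trans (histar j (Finset.mem_univ j)) (hpmin j hq)
    have hkey0 : 0 ≤ wfun f₁ f₂ ε K T tst sst istar := by
      by_contra hneg
      push_neg at hneg
      have htst : tst ∈ Set.Icc t₀ T := (hpD istar).1
      have hsst : sst ∈ closure U ∩ Box := (hpD istar).2
      have hsstpos : ∀ l, 0 < sst l :=
        fun l => lt_of_lt_of_le (inv_pos.2 hRpos) (hsst.2.1 l)
      have hsstorth : sst ∈ orthant d := mem_orthant_of_pos hsstpos
      have hBpos : 0 < barB sst := barB_pos hd sst hsstpos
      have htpos : 0 < tst := lt_of_lt_of_le ht₀.1 htst.1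
      have hexp1 : 1 ≤ Real.exp (K * (T - tst)) := by
        have h0 : (0:ℝ) ≤ K * (T - tst) :=
          mul_nonneg (by linarith) (by linarith [htst.2])
        calc (1:ℝ) = Real.exp 0 := Real.exp_zero.symm
          _ ≤ Real.exp (K * (T - tst)) := Real.exp_le_exp.2 h0
      have hexppos : 0 < Real.exp (K * (T - tst)) := Real.exp_pos _
      by_cases hteq : tst = T
      · have hterm' := hterm sst ⟨hsst.1, hsstorth⟩ istar
        rw [wfun, hteq] at hneg
        simp only [sub_self, mul_zero, Real.exp_zero, mul_one] at hneg
        nlinarith [mul_pos hε hBpos]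
      have htltT : tst < T := lt_of_le_of_ne htst.2 hteq
      have htIoo : tst ∈ Set.Ioo (0:ℝ) T := ⟨htpos, htltT⟩
      by_cases hbox : ∃ l, sst l = R⁻¹ ∨ sst l = R
      · obtain ⟨l, hl⟩ := hbox
        have hBge : R ^ 2 ≤ barB sst := by
          have hterm' : barF (sst l) ≤ barB sst :=
            Finset.single_le_sum (fun m _ => barF_nonneg _) (Finset.mem_univ l)
          have hbf : R ^ 2 ≤ barF (sst l) := by
            rcases hl with hl | hl
            · rw [hl, barF]
              have h2 : ((R⁻¹) ^ 2)⁻¹ = R ^ 2 := by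
                rw [← inv_pow, inv_inv]
              rw [h2]
              have := sq_nonneg R⁻¹
              nlinarith
            · rw [hl, barF]
              have : 0 < (R ^ 2)⁻¹ := by positivity
              linarith
          linarith
        have hnorm1 : norm1 sst ≤ d * R := by
          rw [norm1]
          have hstep : ∑ m, |sst m| ≤ ∑ _m : Fin d, R := by
            refine Finset.sum_le_sum fun m _ => ?_
            rw [abs_of_pos (hsstpos m)]
            exact hsst.2.2 m
          have hconst : ∑ _m : Fin d, R = d * R := by
            rw [Finset.sum_const, Finset.card_univ, Fintype.card_fin, nsmul_eq_mul]
          linarith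
        have hgrow := hMh tst ⟨htpos.le, htst.2⟩ sst ⟨hsst.1, hsstorth⟩ istar
        rw [wfun] at hneg
        have hεB : ε * R ^ 2 ≤ ε * Real.exp (K * (T - tst)) * barB sst := by
          have h1 : ε * R ^ 2 ≤ ε * barB sst := by nlinarith
          nlinarith [mul_pos hε hBpos]
        have hMc : M * (1 + norm1 sst) ≤ M * (1 + d * R) := by nlinarith
        nlinarith
      push_neg at hbox
      by_cases hfr : sst ∈ frontier U
      · have hb := hbdry tst htIoo sst ⟨hfr, hsstorth⟩ istar
        rw [wfun] at hneg
        nlinarith [mul_pos hε hBpos]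
      have hsstU : sst ∈ U := by
        rw [← hU.interior_eq]
        by_contra hni
        exact hfr ⟨hsst.1, hni⟩
      -- the interior minimum case
      have hexpE : 0 < ε * Real.exp (K * (T - tst)) := mul_pos hε hexppos
      have hE0 : 0 ≤ ε * Real.exp (K * (T - tst)) := hexpE.le
      have hQpos : 0 < ε * Real.exp (K * (T - tst)) * barB sst := mul_pos hexpE hBpos
      have hNopen : IsOpen (U ∩ {y : Fin d → ℝ | ∀ l, R⁻¹ < y l ∧ y l < R}) := by
        refine hU.inter ?_
        have hset : {y : Fin d → ℝ | ∀ l, R⁻¹ < y l ∧ y l < R}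
            = Set.univ.pi (fun _ => Set.Ioo R⁻¹ R) := by
          ext y
          simp [Set.mem_pi, Set.mem_Ioo]
        rw [hset]
        exact isOpen_set_pi Set.finite_univ (fun _ _ => isOpen_Ioo)
      have hsstN : sst ∈ U ∩ {y : Fin d → ℝ | ∀ l, R⁻¹ < y l ∧ y l < R} :=
        ⟨hsstU, fun l => ⟨lt_of_le_of_ne (hsst.2.1 l) (fun h => (hbox l).1 h.symm),
          lt_of_le_of_ne (hsst.2.2 l) (hbox l).2⟩⟩
      have hgmin : IsLocalMin (fun y => wfun f₁ f₂ ε K T tst y istar) sst := by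
        filter_upwards [hNopen.mem_nhds hsstN] with y hy
        exact hmin (tst, y) ⟨htst, subset_closure hy.1,
          fun l => (hy.2 l).1.le, fun l => (hy.2 l).2.le⟩ istar
      -- time derivative at the minimum
      have htime := wfun_hasDerivAt_time hC12₁ hC12₂ htIoo hsstU istar ε K
      have hct : 0 ≤ deriv (fun t' => f₁ t' sst istar) tst
          - deriv (fun t' => f₂ t' sst istar) tst
          - ε * K * Real.exp (K * (T - tst)) * barB sst := by
        refine deriv_nonneg_left_endpoint htltT htime ?_
        intro x hx
        exact hmin (x, sst) ⟨⟨le_trans htst.1 hx.1, hx.2⟩, hsst⟩ istar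
      -- first-order conditions in space
      have hsp1 : ∀ l : Fin d, pd l (fun s' => f₁ tst s' istar) sst
          - pd l (fun s' => f₂ tst s' istar) sst
          + ε * Real.exp (K * (T - tst)) * (2 * sst l - 2 / (sst l) ^ 3) = 0 := by
        intro l
        have hloc : IsLocalMin
            (fun c => wfun f₁ f₂ ε K T tst (Function.update sst l c) istar) (sst l) :=
          isLocalMin_update hgmin l
        have hder := wfun_hasDerivAt_space hUsub hC12₁ hC12₂ htIoo hsstU istar ε K l
        have h0 := hloc.deriv_eq_zero
        rw [hder.deriv] at h0
        exact h0
      -- second-order condition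
      have hgmin' : IsLocalMin (fun s' => wfun f₁ f₂ ε K T tst s' istar) sst := hgmin
      have hQ : ∀ v : Fin d → ℝ, 0 ≤ ∑ lo, ∑ li, v lo * v li *
          pd lo (pd li (fun s' => wfun f₁ f₂ ε K T tst s' istar)) sst := by
        intro v
        exact quad_form_nonneg hU hsstU
          (fun y hy l => (wfun_hasDerivAt_space hUsub hC12₁ hC12₂
            htIoo hy istar ε K l).differentiableAt)
          (fun l => wfun_contOn_pd hUsub hC12₁ hC12₂ htIoo istar ε K l)
          (fun y hy lo li => (wfun_hasDerivAt_space2 hU hUsub hC12₁ hC12₂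
            htIoo hy istar ε K lo li).differentiableAt)
          (fun lo li => wfun_contOn_pd2 hU hUsub hC12₁ hC12₂ htIoo istar ε K lo li)
          hgmin' v
      have hH : 0 ≤ ∑ l, ∑ l', amat σm istar l l' * sst l * sst l' *
          pd l (pd l' (fun s' => wfun f₁ f₂ ε K T tst s' istar)) sst :=
        amat_quad_nonneg σm istar sst _ hQ
      -- split the Hessian of w
      have hXeq : ∀ l l' : Fin d,
          pd l (pd l' (fun s' => wfun f₁ f₂ ε K T tst s' istar)) sst
          = pd l (pd l' (fun s' => f₁ tst s' istar)) sst
            - pd l (pd l' (fun s' => f₂ tst s' istar)) sst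
            + ε * Real.exp (K * (T - tst)) *
              (if l = l' then 2 + 6 / (sst l') ^ 4 else 0) :=
        fun l l' => wfun_pd2_eq hU hUsub hC12₁ hC12₂ htIoo hsstU istar ε K l l'
      have hsplit : ∑ l, ∑ l', amat σm istar l l' * sst l * sst l' *
            pd l (pd l' (fun s' => wfun f₁ f₂ ε K T tst s' istar)) sst
          = (∑ l, ∑ l', amat σm istar l l' * sst l * sst l' *
              pd l (pd l' (fun s' => f₁ tst s' istar)) sst)
            - (∑ l, ∑ l', amat σm istar l l' * sst l * sst l' *
              pd l (pd l' (fun s' => f₂ tst s' istar)) sst)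
            + ε * Real.exp (K * (T - tst)) *
              ∑ l, amat σm istar l l * sst l * sst l * (2 + 6 / (sst l) ^ 4) := by
        have hrow : ∀ l : Fin d, ∑ l', amat σm istar l l' * sst l * sst l' *
              pd l (pd l' (fun s' => wfun f₁ f₂ ε K T tst s' istar)) sst
            = (∑ l', amat σm istar l l' * sst l * sst l' *
                pd l (pd l' (fun s' => f₁ tst s' istar)) sst)
              - (∑ l', amat σm istar l l' * sst l * sst l' *
                pd l (pd l' (fun s' => f₂ tst s' istar)) sst)
              + ε * Real.exp (K * (T - tst)) *
                (amat σm istar l l * sst l * sst l * (2 + 6 / (sst l) ^ 4)) := by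
          intro l
          have hterm' : ∀ l' : Fin d, amat σm istar l l' * sst l * sst l' *
                pd l (pd l' (fun s' => wfun f₁ f₂ ε K T tst s' istar)) sst
              = amat σm istar l l' * sst l * sst l' *
                  pd l (pd l' (fun s' => f₁ tst s' istar)) sst
                - amat σm istar l l' * sst l * sst l' *
                  pd l (pd l' (fun s' => f₂ tst s' istar)) sst
                + (if l = l' then ε * Real.exp (K * (T - tst)) *
                    (amat σm istar l l' * sst l * sst l' * (2 + 6 / (sst l') ^ 4))
                  else 0) := by
            intro l'
            rw [hXeq l l']
            by_cases h : l = l'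
            · rw [if_pos h, if_pos h]
              ring
            · rw [if_neg h, if_neg h]
              ring
          rw [Finset.sum_congr rfl (fun l' _ => hterm' l')]
          rw [Finset.sum_add_distrib, Finset.sum_sub_distrib]
          rw [Finset.sum_ite_eq Finset.univ l
            (fun l' => ε * Real.exp (K * (T - tst)) *
              (amat σm istar l l' * sst l * sst l' * (2 + 6 / (sst l') ^ 4)))]
          rw [if_pos (Finset.mem_univ l)]
        rw [Finset.sum_congr rfl (fun l _ => hrow l)]
        rw [Finset.sum_add_distrib, Finset.sum_sub_distrib, ← Finset.mul_sum]
      -- bound on the barrier Hessian term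
      have hΔ : ∑ l, amat σm istar l l * sst l * sst l * (2 + 6 / (sst l) ^ 4)
          ≤ 6 * A * barB sst := by
        have h6 : 6 * A * barB sst = ∑ l, 6 * A * barF (sst l) := by
          rw [barB, Finset.mul_sum]
        rw [h6]
        refine Finset.sum_le_sum fun l _ => ?_
        have hx := hsstpos l
        have hx0 : sst l ≠ 0 := ne_of_gt hx
        have hxe : sst l * sst l * (2 + 6 / (sst l) ^ 4)
            = 2 * (sst l) ^ 2 + 6 * ((sst l) ^ 2)⁻¹ := by
          field_simp
        have h2i : 0 < ((sst l) ^ 2)⁻¹ := by positivity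
        have ha0 := amat_diag_nonneg σm istar l
        have haA := hAa istar l
        have h1s : 0 ≤ (sst l) ^ 2 := sq_nonneg _
        calc amat σm istar l l * sst l * sst l * (2 + 6 / (sst l) ^ 4)
            = amat σm istar l l * (2 * (sst l) ^ 2 + 6 * ((sst l) ^ 2)⁻¹) := by
              rw [← hxe]; ring
          _ ≤ A * (6 * ((sst l) ^ 2 + ((sst l) ^ 2)⁻¹)) := by nlinarith
          _ = 6 * A * barF (sst l) := by
              rw [show barF (sst l) = (sst l) ^ 2 + ((sst l) ^ 2)⁻¹ from rfl]
              ring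
      -- first-order sum identities and bounds
      have hSsum : ∑ l, sst l * pd l (fun s' => f₁ tst s' istar) sst
            - ∑ l, sst l * pd l (fun s' => f₂ tst s' istar) sst
          = -(ε * Real.exp (K * (T - tst)))
            * ∑ l, sst l * (2 * sst l - 2 / (sst l) ^ 3) := by
        rw [← Finset.sum_sub_distrib, Finset.mul_sum]
        exact Finset.sum_congr rfl fun l _ => by linear_combination (sst l) * (hsp1 l)
      have hSbar : ∑ l, sst l * (2 * sst l - 2 / (sst l) ^ 3) ≤ 2 * barB sst := by
        have h2B : 2 * barB sst = ∑ l, 2 * barF (sst l) := by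
          rw [barB, Finset.mul_sum]
        rw [h2B]
        refine Finset.sum_le_sum fun l _ => ?_
        have hx := hsstpos l
        have hx0 : sst l ≠ 0 := ne_of_gt hx
        have hxe : sst l * (2 * sst l - 2 / (sst l) ^ 3)
            = 2 * (sst l) ^ 2 - 2 * ((sst l) ^ 2)⁻¹ := by
          field_simp
        have h2i : 0 < ((sst l) ^ 2)⁻¹ := by positivity
        rw [hxe, show barF (sst l) = (sst l) ^ 2 + ((sst l) ^ 2)⁻¹ from rfl]
        linarith
      -- Markov chain term
      have hwj : ∀ j : Fin k, wfun f₁ f₂ ε K T tst sst istar ≤ wfun f₁ f₂ ε K T tst sst j :=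
        fun j => hmin (tst, sst) ⟨htst, hsst⟩ j
      have hLam : 0 ≤ ∑ j, Λ istar j * f₁ tst sst j - ∑ j, Λ istar j * f₂ tst sst j := by
        have hts : ∀ j : Fin k, Λ istar j * f₁ tst sst j - Λ istar j * f₂ tst sst j
            = Λ istar j * (wfun f₁ f₂ ε K T tst sst j - wfun f₁ f₂ ε K T tst sst istar)
              + Λ istar j * (wfun f₁ f₂ ε K T tst sst istar
                  - ε * Real.exp (K * (T - tst)) * barB sst) := by
          intro j
          simp only [wfun]
          ring
        rw [← Finset.sum_sub_distrib]
        rw [Finset.sum_congr rfl fun j _ => hts j]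
        rw [Finset.sum_add_distrib, ← Finset.sum_mul]
        rw [hΛ2 istar, zero_mul, add_zero]
        refine Finset.sum_nonneg fun j _ => ?_
        by_cases hji : j = istar
        · rw [hji]
          simp
        · exact mul_nonneg (hΛ1 istar j (fun h => hji h.symm)) (by linarith [hwj j])
      -- discount term
      have hrterm : r istar * f₁ tst sst istar - r istar * f₂ tst sst istar ≤ 0 := by
        have hweq : wfun f₁ f₂ ε K T tst sst istar
            = f₁ tst sst istar - f₂ tst sst istar
              + ε * Real.exp (K * (T - tst)) * barB sst := rfl
        have hF : f₁ tst sst istar - f₂ tst sst istar < 0 := by nlinarith [hQpos]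
        nlinarith [hr istar]
      -- assemble
      have h₁ := hsub tst htIoo sst hsstU istar
      have h₂ := hsup tst htIoo sst hsstU istar
      simp only [Lop] at h₁ h₂
      have c1 : deriv (fun t' => f₁ t' sst istar) tst - deriv (fun t' => f₂ t' sst istar) tst
          ≥ (2 * Rb + 3 * A + 1) * (ε * Real.exp (K * (T - tst)) * barB sst) := by
        rw [← hKdef]
        nlinarith [hct]
      have hre : 0 ≤ r istar * (ε * Real.exp (K * (T - tst))) :=
        mul_nonneg (hr istar) hE0
      have hEB2 : 0 ≤ ε * Real.exp (K * (T - tst)) * (2 * barB sst) :=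
        mul_nonneg hE0 (by linarith)
      have c2 : r istar * (∑ l, sst l * pd l (fun s' => f₁ tst s' istar) sst)
            - r istar * (∑ l, sst l * pd l (fun s' => f₂ tst s' istar) sst)
          ≥ -(2 * Rb) * (ε * Real.exp (K * (T - tst)) * barB sst) := by
        have hs12 : r istar * (∑ l, sst l * pd l (fun s' => f₁ tst s' istar) sst)
              - r istar * (∑ l, sst l * pd l (fun s' => f₂ tst s' istar) sst)
            = -(r istar * ((ε * Real.exp (K * (T - tst)))
                * (∑ l, sst l * (2 * sst l - 2 / (sst l) ^ 3)))) := by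
          linear_combination (r istar) * hSsum
        rw [hs12]
        nlinarith [mul_le_mul_of_nonneg_left hSbar hre,
          mul_le_mul_of_nonneg_right (hRbr istar) hEB2]
      have c3 : 1/2 * (∑ l, ∑ l', amat σm istar l l' * sst l * sst l' *
              pd l (pd l' (fun s' => f₁ tst s' istar)) sst)
            - 1/2 * (∑ l, ∑ l', amat σm istar l l' * sst l * sst l' *
              pd l (pd l' (fun s' => f₂ tst s' istar)) sst)
          ≥ -(3 * A) * (ε * Real.exp (K * (T - tst)) * barB sst) := by
        have hH' := hH
        rw [hsplit] at hH'
        nlinarith [mul_le_mul_of_nonneg_left hΔ hE0]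
      linarith [c1, c2, c3, hrterm, hLam, hQpos, h₁, h₂]
    calc (0:ℝ) ≤ wfun f₁ f₂ ε K T tst sst istar := hkey0
      _ ≤ wfun f₁ f₂ ε K T t₀ s₀ i₀ := hmin (t₀, s₀) hDne i₀
  -- conclude from key
  have hBpos₀ : 0 < barB s₀ := barB_pos hd s₀ hs₀pos
  refine le_of_forall_pos_le_add ?_
  intro ε' hε'
  have hkey := key (ε' / (Real.exp (K * (T - t₀)) * barB s₀))
    (div_pos hε' (mul_pos (Real.exp_pos _) hBpos₀))
  rw [wfun] at hkey
  have heq : ε' / (Real.exp (K * (T - t₀)) * barB s₀) * Real.exp (K * (T - t₀))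
      * barB s₀ = ε' := by
    have h1 : Real.exp (K * (T - t₀)) ≠ 0 := ne_of_gt (Real.exp_pos _)
    have h2 : barB s₀ ≠ 0 := ne_of_gt hBpos₀
    field_simp
  linarith
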